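/- There exists a constant C > 0 such that for all α ∈ (0,1], all r ∈ ℕ, and all s₁,…,s_r ∈ ℕ with Σᵢ sᵢ = αs and Σᵢ i·sᵢ = s (where s, αs ∈ ℕ), we have ∏_{i=1}^r sᵢ^{−sᵢ} ≤ C^{αs} / (α²s)^{αs}. -/

import Mathlib

open Finset

lemma aux_exp18 (d t : ℕ) (ht : 0 < t) :
    Real.exp (-(t : ℝ)) ≤ ((d : ℝ) / ((d : ℝ) + t)) ^ d := by
  rcases Nat.eq_zero_or_pos d with hd | hd
  · subst hd
    simp only [Nat.cast_zero, pow_zero]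
    calc Real.exp (-(t : ℝ)) ≤ Real.exp 0 :=
          Real.exp_le_exp.mpr (neg_nonpos.mpr (Nat.cast_nonneg t))
      _ = 1 := Real.exp_zero
  · have hd' : (0 : ℝ) < d := by exact_mod_cast hd
    have ht' : (0 : ℝ) < t := by exact_mod_cast ht
    have h1 : (1 : ℝ) + (t : ℝ) / d ≤ Real.exp ((t : ℝ) / d) := by
      have := Real.add_one_le_exp ((t : ℝ) / d); linarith
    have h2 : (((d : ℝ) + t) / d) ^ d ≤ Real.exp (t : ℝ) := by
      calc (((d : ℝ) + t) / d) ^ d = (1 + (t : ℝ) / d) ^ d := by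
            congr 1; field_simp
        _ ≤ Real.exp ((t : ℝ) / d) ^ d := by
            apply pow_le_pow_left₀ (by positivity) h1
        _ = Real.exp ((t : ℝ) / d * d) := by
            rw [← Real.exp_nat_mul]; ring_nf
        _ = Real.exp (t : ℝ) := by
            congr 1; field_simp
    have hpos : (0 : ℝ) < (((d : ℝ) + t) / d) ^ d := by positivity
    have h3 : (Real.exp (t : ℝ))⁻¹ ≤ ((((d : ℝ) + t) / d) ^ d)⁻¹ :=
      inv_anti₀ hpos h2
    rw [Real.exp_neg]
    calc (Real.exp (t : ℝ))⁻¹ ≤ ((((d : ℝ) + t) / d) ^ d)⁻¹ := h3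
      _ = ((d : ℝ) / ((d : ℝ) + t)) ^ d := by
          rw [← inv_pow, inv_div]

/-- There is an absolute constant `C > 0` such that for all `α = t/s ∈ (0,1]`
and naturals `s₁,…,s_r` with `∑ sᵢ = αs = t` and `∑ i sᵢ = s`, we have
`∏ sᵢ^{-sᵢ} ≤ C^{αs} / (α² s)^{αs}` (with the convention `0^0 = 1`). -/
theorem stmt18 : ∃ C : ℝ, 0 < C ∧
    ∀ (r s t : ℕ) (f : ℕ → ℕ), 0 < s → 0 < t → t ≤ s →
      (∑ i ∈ Finset.Icc 1 r, f i) = t →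
      (∑ i ∈ Finset.Icc 1 r, i * f i) = s →
      ∏ i ∈ Finset.Icc 1 r, (1 / (f i : ℝ) ^ f i) ≤
        C ^ t / (((t : ℝ) / s) ^ 2 * s) ^ t := by
  refine ⟨Real.exp 1, Real.exp_pos 1, ?_⟩
  intro r s t f hs ht hts hsum1 hsum2
  have hs' : (0 : ℝ) < s := by exact_mod_cast hs
  have ht' : (0 : ℝ) < t := by exact_mod_cast ht
  set β : ℝ := (t : ℝ) / s with hβ
  have hβpos : 0 < β := div_pos ht' hs'
  have hβle : β ≤ 1 := by rw [hβ, div_le_one hs']; exact_mod_cast hts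
  have h1β : (0 : ℝ) ≤ 1 - β := by linarith
  set T : Finset ℕ := Finset.Icc 1 r with hT
  -- the key identity for (i-1) weights
  have hd : ∑ i ∈ T, (i - 1) * f i = s - t := by
    have h1 : ∑ i ∈ T, i * f i = ∑ i ∈ T, ((i - 1) * f i + f i) := by
      apply Finset.sum_congr rfl
      intro i hi
      have h1 : 1 ≤ i := (Finset.mem_Icc.mp hi).1
      have h2 : i = (i - 1) + 1 := by omega
      nth_rewrite 1 [h2]; ring
    rw [Finset.sum_add_distrib, hsum1, hsum2] at h1
    omega
  set S : Finset ℕ := T.filter (fun i => f i ≠ 0) with hS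
  have hsum1S : ∑ i ∈ S, f i = t := by
    rw [hS, Finset.sum_filter_ne_zero, hsum1]
  have hdS : ∑ i ∈ S, (i - 1) * f i = s - t := by
    rw [hS, ← hd]
    apply Finset.sum_filter_of_ne
    intro x _ hx
    intro h; rw [h, mul_zero] at hx; exact hx rfl
  -- geometric weights
  set q : ℕ → ℝ := fun i => β * (1 - β) ^ (i - 1) with hq
  have hqnn : ∀ i, 0 ≤ q i := fun i => mul_nonneg hβpos.le (pow_nonneg h1β _)
  have hqpos : ∀ i ∈ S, 0 < q i := by
    intro i hi
    rcases lt_or_eq_of_le h1β with h | h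
    · exact mul_pos hβpos (pow_pos h _)
    · -- β = 1, so s = t, so f i ≠ 0 forces i = 1
      have hst : s = t := by
        have hβ1 : β = 1 := by linarith
        rw [hβ, div_eq_one_iff_eq (ne_of_gt hs')] at hβ1
        exact_mod_cast hβ1.symm
      have hz : ∑ i ∈ T, (i - 1) * f i = 0 := by rw [hd, hst]; simp
      rw [Finset.sum_eq_zero_iff] at hz
      obtain ⟨hiT, hfi⟩ := Finset.mem_filter.mp hi
      have := hz i hiT
      have hi1 : i - 1 = 0 := by
        rcases Nat.mul_eq_zero.mp this with h' | h'
        · exact h'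
        · exact absurd h' hfi
      rw [hq]; simp only [hi1, pow_zero, mul_one]; exact hβpos
  -- sum of q over T is at most 1
  have hqsum : ∑ i ∈ T, q i ≤ 1 := by
    have hgeo : ∀ n : ℕ, ∑ i ∈ Finset.Icc 1 n, q i = 1 - (1 - β) ^ n := by
      intro n
      induction n with
      | zero => simp
      | succ n ih =>
        rw [Finset.sum_Icc_succ_top (by omega), ih]
        have : q (n + 1) = β * (1 - β) ^ n := by rw [hq]; simp
        rw [this]; ring
    rw [hT, hgeo r]
    have hpow : (0 : ℝ) ≤ (1 - β) ^ r := pow_nonneg h1β r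
    linarith
  -- weighted AM-GM
  set w : ℕ → ℝ := fun i => (f i : ℝ) / t with hw
  set z : ℕ → ℝ := fun i => q i * t / (f i : ℝ) with hz
  have hwnn : ∀ i ∈ S, 0 ≤ w i := fun i _ => div_nonneg (Nat.cast_nonneg _) ht'.le
  have hw1 : ∑ i ∈ S, w i = 1 := by
    rw [hw, ← Finset.sum_div]
    rw [show ∑ i ∈ S, (f i : ℝ) = (t : ℝ) by exact_mod_cast congrArg (Nat.cast (R := ℝ)) hsum1S]
    field_simp
  have hznn : ∀ i ∈ S, 0 ≤ z i :=
    fun i _ => div_nonneg (mul_nonneg (hqnn i) ht'.le) (Nat.cast_nonneg _)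
  have hgm := Real.geom_mean_le_arith_mean_weighted S w z hwnn hw1 hznn
  have hsumwz : ∑ i ∈ S, w i * z i ≤ 1 := by
    have heq : ∑ i ∈ S, w i * z i = ∑ i ∈ S, q i := by
      apply Finset.sum_congr rfl
      intro i hi
      have hfi : f i ≠ 0 := (Finset.mem_filter.mp hi).2
      have hfi' : (f i : ℝ) ≠ 0 := Nat.cast_ne_zero.mpr hfi
      rw [hw, hz]; field_simp
    rw [heq]
    calc ∑ i ∈ S, q i ≤ ∑ i ∈ T, q i :=
          Finset.sum_le_sum_of_subset_of_nonneg (Finset.filter_subset _ _)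
            (fun i _ _ => hqnn i)
      _ ≤ 1 := hqsum
  have hP1 : ∏ i ∈ S, z i ^ w i ≤ 1 := le_trans hgm hsumwz
  have hPnn : 0 ≤ ∏ i ∈ S, z i ^ w i :=
    Finset.prod_nonneg fun i hi => Real.rpow_nonneg (hznn i hi) _
  -- raise to power t
  have hkey : ∏ i ∈ S, z i ^ f i ≤ 1 := by
    have h1 : (∏ i ∈ S, z i ^ w i) ^ t ≤ 1 := pow_le_one₀ hPnn hP1
    have h2 : (∏ i ∈ S, z i ^ w i) ^ t = ∏ i ∈ S, z i ^ f i := by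
      rw [← Finset.prod_pow]
      apply Finset.prod_congr rfl
      intro i hi
      rw [← Real.rpow_natCast (z i ^ w i) t, ← Real.rpow_mul (hznn i hi)]
      have : w i * t = (f i : ℝ) := by rw [hw]; field_simp
      rw [this, Real.rpow_natCast]
    rwa [h2] at h1
  -- unpack z: ∏ (q i * t)^(f i) ≤ ∏ (f i)^(f i)
  have hprodA : ∏ i ∈ S, (q i * t) ^ f i ≤ ∏ i ∈ S, (f i : ℝ) ^ f i := by
    have h1 : ∏ i ∈ S, z i ^ f i =
        (∏ i ∈ S, (q i * t) ^ f i) / ∏ i ∈ S, (f i : ℝ) ^ f i := by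
      rw [← Finset.prod_div_distrib]
      apply Finset.prod_congr rfl
      intro i _
      rw [hz, div_pow]
    have hB : 0 < ∏ i ∈ S, (f i : ℝ) ^ f i := by
      apply Finset.prod_pos
      intro i hi
      have hfi : f i ≠ 0 := (Finset.mem_filter.mp hi).2
      exact pow_pos (by exact_mod_cast Nat.pos_of_ne_zero hfi) _
    rw [h1, div_le_one hB] at hkey
    exact hkey
  -- compute ∏ (q i * t)^(f i)
  have hprodq : ∏ i ∈ S, (q i * t) ^ f i = β ^ t * (1 - β) ^ (s - t) * (t : ℝ) ^ t := by
    have : ∏ i ∈ S, (q i * t) ^ f i =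
        ∏ i ∈ S, (β ^ f i * ((1 - β) ^ ((i - 1) * f i) * (t : ℝ) ^ f i)) := by
      apply Finset.prod_congr rfl
      intro i _
      rw [hq, mul_pow, mul_pow, pow_mul]
      ring
    rw [this, Finset.prod_mul_distrib, Finset.prod_mul_distrib,
      Finset.prod_pow_eq_pow_sum, Finset.prod_pow_eq_pow_sum, Finset.prod_pow_eq_pow_sum,
      hsum1S, hdS]
    ring
  -- LHS equals product over S
  have hLHS : ∏ i ∈ T, (1 / (f i : ℝ) ^ f i) = ∏ i ∈ S, (1 / (f i : ℝ) ^ f i) := by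
    rw [hS]
    symm
    apply Finset.prod_filter_of_ne
    intro x _ hx
    intro h; rw [h] at hx; simp at hx
  have hprodB : ∏ i ∈ S, (1 / (f i : ℝ) ^ f i) = (∏ i ∈ S, (f i : ℝ) ^ f i)⁻¹ := by
    rw [← Finset.prod_inv_distrib]
    apply Finset.prod_congr rfl
    intro i _; rw [one_div]
  -- exponential bound
  set d : ℕ := s - t with hdn
  have hcast : (1 : ℝ) - β = (d : ℝ) / s := by
    rw [hβ, hdn, Nat.cast_sub hts]; field_simp
  have hds : (d : ℝ) + t = s := by rw [hdn, Nat.cast_sub hts]; ring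
  have hexp : Real.exp (-(t : ℝ)) ≤ (1 - β) ^ d := by
    rw [hcast, ← hds]
    exact aux_exp18 d t ht
  have hKpos : 0 < (1 - β) ^ d := lt_of_lt_of_le (Real.exp_pos _) hexp
  -- positivity of the denominator pieces
  have hDpos : 0 < β ^ t * (1 - β) ^ d * (t : ℝ) ^ t := by positivity
  have hApos : 0 < ∏ i ∈ S, (q i * t) ^ f i := by
    apply Finset.prod_pos
    intro i hi
    exact pow_pos (mul_pos (hqpos i hi) ht') _
  -- combine
  have hfinal : (∏ i ∈ S, (f i : ℝ) ^ f i)⁻¹ ≤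
      Real.exp 1 ^ t / (β ^ 2 * s) ^ t := by
    have hBpos : 0 < ∏ i ∈ S, (f i : ℝ) ^ f i := lt_of_lt_of_le hApos hprodA
    have h1 : (∏ i ∈ S, (f i : ℝ) ^ f i)⁻¹ ≤ (β ^ t * (1 - β) ^ d * (t : ℝ) ^ t)⁻¹ := by
      apply inv_anti₀ hDpos
      rw [← hprodq]; exact hprodA
    have hβ2 : β ^ 2 * s = β * t := by
      rw [hβ]; field_simp
    have hexp1 : Real.exp 1 ^ t = Real.exp (t : ℝ) := by
      rw [← Real.exp_nat_mul]; norm_num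
    rw [hβ2, hexp1, mul_pow]
    have hee : Real.exp (t : ℝ) * Real.exp (-(t : ℝ)) = 1 := by
      rw [← Real.exp_add]; simp
    have hinv : ((1 - β) ^ d)⁻¹ ≤ Real.exp (t : ℝ) := by
      have := inv_anti₀ (Real.exp_pos (-(t : ℝ))) hexp
      rwa [Real.exp_neg, inv_inv] at this
    have h2 : (β ^ t * (1 - β) ^ d * (t : ℝ) ^ t)⁻¹ ≤
        Real.exp (t : ℝ) / (β ^ t * (t : ℝ) ^ t) := by
      have heq2 : (β ^ t * (1 - β) ^ d * (t : ℝ) ^ t)⁻¹ =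
          ((1 - β) ^ d)⁻¹ * (β ^ t * (t : ℝ) ^ t)⁻¹ := by
        rw [mul_inv, mul_inv, mul_inv]; ring
      rw [heq2, div_eq_mul_inv]
      apply mul_le_mul_of_nonneg_right hinv
      positivity
    exact le_trans h1 h2
  rw [hLHS, hprodB]
  exact hfinal
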